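/- (Theorem 2) Let M = (I, O, Q, q_init, δ, λ) be an IGMM and r : Q → Q a mapping satisfying r(q) ⊑ q for every q ∈ Q. Define M' = (I, O, Q', q'_init, δ', λ) where Q' = r(Q), q'_init = r(q_init), and for q ∈ Q' and i ∈ 𝔹^I, δ'(q,i) = r(δ(q,i)) when δ(q,i) is defined and δ'(q,i) is undefined otherwise, with the output function of M' being the restriction of λ to Q'. Then M' is a specialization of M. -/

import Mathlib

/-- An incompletely specified generalized Mealy machine (IGMM) over input
propositions `I`, output propositions `O`, with state set `Q`.
Input valuations are `I → Bool`, output valuations are `O → Bool`.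
`delta` is the partial transition function, `lam` the output function. -/
structure IGMM (I O Q : Type*) where
  init : Q
  delta : Q → (I → Bool) → Option Q
  lam : Q → (I → Bool) → Set (O → Bool)
  lam_nonempty : ∀ q i, (lam q i).Nonempty
  lam_top : ∀ q i, delta q i = none → lam q i = Set.univ

namespace IGMM

/-- `(ι, o) ⊨ M_q` : either an infinite run, or a finite run ending where `delta`
is undefined. -/
def Sat {I O Q : Type*} (M : IGMM I O Q) (q : Q) (ι : ℕ → I → Bool)
    (o : ℕ → O → Bool) : Prop :=
  (∃ qs : ℕ → Q, qs 0 = q ∧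
      ∀ j : ℕ, M.delta (qs j) (ι j) = some (qs (j + 1)) ∧ o j ∈ M.lam (qs j) (ι j)) ∨
  (∃ (k : ℕ) (qs : ℕ → Q), qs 0 = q ∧
      (∀ j < k, M.delta (qs j) (ι j) = some (qs (j + 1)) ∧ o j ∈ M.lam (qs j) (ι j)) ∧
      M.delta (qs k) (ι k) = none)

/-- The behaviour set `Beh_M(q, ι) = {o | (ι, o) ⊨ M_q}`. -/
def Beh {I O Q : Type*} (M : IGMM I O Q) (q : Q) (ι : ℕ → I → Bool) :
    Set (ℕ → O → Bool) :=
  {o | M.Sat q ι o}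

end IGMM

/-- `q' ⊑ q` : the state `q'` of `M'` is a specialization of the state `q` of `M`. -/
def IGMM.Specializes {I O Q' Q : Type*} (M' : IGMM I O Q') (q' : Q')
    (M : IGMM I O Q) (q : Q) : Prop :=
  ∀ ι : ℕ → I → Bool, M'.Beh q' ι ⊆ M.Beh q ι

/-- `q' ≈ q` : the state `q'` of `M'` is a variation of the state `q` of `M`. -/
def IGMM.IsVariation {I O Q' Q : Type*} (M' : IGMM I O Q') (q' : Q')
    (M : IGMM I O Q) (q : Q) : Prop :=
  ∀ ι : ℕ → I → Bool, (M'.Beh q' ι ∩ M.Beh q ι).Nonempty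

/-- The machine `M'` of Theorem 2: states `Q' = r(Q)`, initial state `r(q_init)`,
`δ'(q, i) = r(δ(q, i))` when `δ(q, i)` is defined (undefined otherwise), and the
output function is the restriction of `λ`. -/
def IGMM.remap {I O Q : Type*} (M : IGMM I O Q) (r : Q → Q) :
    IGMM I O (Set.range r) where
  init := ⟨r M.init, ⟨M.init, rfl⟩⟩
  delta := fun q i => (M.delta q.1 i).map fun p => ⟨r p, ⟨p, rfl⟩⟩
  lam := fun q i => M.lam q.1 i
  lam_nonempty := fun q i => M.lam_nonempty q.1 i
  lam_top := fun q i h => M.lam_top q.1 i (by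
    simp only [Option.map_eq_none_iff] at h
    exact h)



section Aux

variable {I O Q : Type*}

namespace IGMMAux

/-- Prefix satisfaction up to `n`. -/
def Pn (M : IGMM I O Q) (q : Q) (ι : ℕ → I → Bool) (o : ℕ → O → Bool) (n : ℕ) : Prop :=
  (∃ qs : ℕ → Q, qs 0 = q ∧
      ∀ j < n, M.delta (qs j) (ι j) = some (qs (j + 1)) ∧ o j ∈ M.lam (qs j) (ι j)) ∨
  (∃ k < n, ∃ qs : ℕ → Q, qs 0 = q ∧
      (∀ j < k, M.delta (qs j) (ι j) = some (qs (j + 1)) ∧ o j ∈ M.lam (qs j) (ι j)) ∧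
      M.delta (qs k) (ι k) = none)

/-- canonical trace -/
def trace (M : IGMM I O Q) (q : Q) (ι : ℕ → I → Bool) : ℕ → Option Q
  | 0 => some q
  | n + 1 => (trace M q ι n).bind fun p => M.delta p (ι n)

lemma trace_run (M : IGMM I O Q) (q : Q) (ι : ℕ → I → Bool) (n : ℕ) (qs : ℕ → Q)
    (h0 : qs 0 = q) (hs : ∀ j < n, M.delta (qs j) (ι j) = some (qs (j + 1))) :
    ∀ j ≤ n, trace M q ι j = some (qs j) := by
  intro j hj
  induction j with
  | zero => simp [trace, h0]
  | succ j ih =>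
      have hj' : j ≤ n := Nat.le_of_succ_le hj
      rw [trace, ih hj']
      simpa using hs j (Nat.lt_of_succ_le hj)

lemma sat_pn (M : IGMM I O Q) (q : Q) (ι : ℕ → I → Bool) (o : ℕ → O → Bool)
    (h : M.Sat q ι o) (n : ℕ) : Pn M q ι o n := by
  rcases h with ⟨qs, h0, hs⟩ | ⟨k, qs, h0, hs, hk⟩
  · exact Or.inl ⟨qs, h0, fun j _ => hs j⟩
  · by_cases hkn : k < n
    · exact Or.inr ⟨k, hkn, qs, h0, hs, hk⟩
    · exact Or.inl ⟨qs, h0, fun j hj => hs j (lt_of_lt_of_le hj (le_of_not_gt hkn))⟩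

lemma pn_congr (M : IGMM I O Q) (q : Q) (ι : ℕ → I → Bool) {o o' : ℕ → O → Bool} {n : ℕ}
    (hoo : ∀ j < n, o j = o' j) (h : Pn M q ι o n) : Pn M q ι o' n := by
  rcases h with ⟨qs, h0, hs⟩ | ⟨k, hkn, qs, h0, hs, hk⟩
  · exact Or.inl ⟨qs, h0, fun j hj => ⟨(hs j hj).1, (hoo j hj) ▸ (hs j hj).2⟩⟩
  · exact Or.inr ⟨k, hkn, qs, h0,
      fun j hj => ⟨(hs j hj).1, (hoo j (hj.trans hkn)) ▸ (hs j hj).2⟩, hk⟩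

lemma pn_sat (M : IGMM I O Q) (q : Q) (ι : ℕ → I → Bool) (o : ℕ → O → Bool)
    (h : ∀ n, Pn M q ι o n) : M.Sat q ι o := by
  by_cases hfin : ∃ k, ∃ qs : ℕ → Q, qs 0 = q ∧
      (∀ j < k, M.delta (qs j) (ι j) = some (qs (j + 1)) ∧ o j ∈ M.lam (qs j) (ι j)) ∧
      M.delta (qs k) (ι k) = none
  · exact Or.inr hfin
  · have hleft : ∀ n, ∃ qs : ℕ → Q, qs 0 = q ∧
        ∀ j < n, M.delta (qs j) (ι j) = some (qs (j + 1)) ∧ o j ∈ M.lam (qs j) (ι j) := by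
      intro n
      rcases h n with hl | ⟨k, _, qs, h0, hs, hk⟩
      · exact hl
      · exact absurd ⟨k, qs, h0, hs, hk⟩ hfin
    have htr : ∀ n, ∃ p, trace M q ι n = some p := by
      intro n
      obtain ⟨qs, h0, hs⟩ := hleft n
      exact ⟨qs n, trace_run M q ι n qs h0 (fun j hj => (hs j hj).1) n le_rfl⟩
    refine Or.inl ⟨fun n => (trace M q ι n).getD q, rfl, ?_⟩
    intro j
    obtain ⟨qs, h0, hs⟩ := hleft (j + 1)
    have e1 : trace M q ι j = some (qs j) :=
      trace_run M q ι (j + 1) qs h0 (fun i hi => (hs i hi).1) j (Nat.le_succ j)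
    have e2 : trace M q ι (j + 1) = some (qs (j + 1)) :=
      trace_run M q ι (j + 1) qs h0 (fun i hi => (hs i hi).1) (j + 1) le_rfl
    simp only [e1, e2, Option.getD_some]
    exact hs j (Nat.lt_succ_self j)

/-- tail lemma -/
lemma sat_tail (M : IGMM I O Q) (q q1 : Q) (ι : ℕ → I → Bool) (o : ℕ → O → Bool)
    (h : M.Sat q ι o) (hδ : M.delta q (ι 0) = some q1) :
    o 0 ∈ M.lam q (ι 0) ∧ M.Sat q1 (fun j => ι (j + 1)) (fun j => o (j + 1)) := by
  rcases h with ⟨qs, h0, hs⟩ | ⟨k, qs, h0, hs, hk⟩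
  · have h00 := (hs 0).1
    rw [h0] at h00
    have hq1 : qs 1 = q1 := by rw [h00] at hδ; exact Option.some_inj.mp hδ
    refine ⟨h0 ▸ (hs 0).2, Or.inl ⟨fun j => qs (j + 1), hq1, fun j => (hs (j + 1))⟩⟩
  · cases k with
    | zero => rw [h0, hδ] at hk; exact absurd hk (by simp)
    | succ k' =>
        have h00 := (hs 0 (Nat.succ_pos k')).1
        rw [h0] at h00
        have hq1 : qs 1 = q1 := by rw [h00] at hδ; exact Option.some_inj.mp hδ
        refine ⟨h0 ▸ (hs 0 (Nat.succ_pos k')).2,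
          Or.inr ⟨k', fun j => qs (j + 1), hq1,
            fun j hj => hs (j + 1) (Nat.succ_lt_succ hj), hk⟩⟩

/-- prepend lemma -/
lemma pn_cons (M : IGMM I O Q) (q q1 : Q) (ι : ℕ → I → Bool) (o : ℕ → O → Bool) (n : ℕ)
    (hδ : M.delta q (ι 0) = some q1) (ho : o 0 ∈ M.lam q (ι 0))
    (h : Pn M q1 (fun j => ι (j + 1)) (fun j => o (j + 1)) n) : Pn M q ι o (n + 1) := by
  rcases h with ⟨qs, h0, hs⟩ | ⟨k, hkn, qs, h0, hs, hk⟩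
  · refine Or.inl ⟨fun j => Nat.rec q (fun j _ => qs j) j, rfl, ?_⟩
    intro j hj
    cases j with
    | zero =>
        refine ⟨?_, ho⟩
        show M.delta q (ι 0) = some (qs 0)
        rw [h0]; exact hδ
    | succ j => exact hs j (Nat.lt_of_succ_lt_succ hj)
  · refine Or.inr ⟨k + 1, Nat.succ_lt_succ hkn, fun j => Nat.rec q (fun j _ => qs j) j, rfl,
      ?_, hk⟩
    intro j hj
    cases j with
    | zero =>
        refine ⟨?_, ho⟩
        show M.delta q (ι 0) = some (qs 0)
        rw [h0]; exact hδ
    | succ j => exact hs j (Nat.lt_of_succ_lt_succ hj)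

/-- extension lemma: a prefix can be extended to a full behaviour. -/
lemma pn_extend (M : IGMM I O Q) (q : Q) (ι : ℕ → I → Bool) (o : ℕ → O → Bool) (n : ℕ)
    (h : Pn M q ι o n) : ∃ o', M.Sat q ι o' ∧ ∀ j < n, o' j = o j := by
  classical
  rcases h with ⟨qs, h0, hs⟩ | ⟨k, _, qs, h0, hs, hk⟩
  swap
  · exact ⟨o, Or.inr ⟨k, qs, h0, hs, hk⟩, fun j _ => rfl⟩
  have htr : ∀ j ≤ n, trace M q ι j = some (qs j) :=
    trace_run M q ι n qs h0 (fun j hj => (hs j hj).1)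
  set o' : ℕ → O → Bool := fun j =>
    if j < n then o j
    else (trace M q ι j).elim (fun _ => true) (fun p => (M.lam_nonempty p (ι j)).choose)
    with ho'
  have key : ∀ j p, trace M q ι j = some p → o' j ∈ M.lam p (ι j) := by
    intro j p hp
    by_cases hj : j < n
    · have : p = qs j := by
        have := htr j hj.le; rw [hp] at this; exact Option.some_inj.mp this
      rw [this]
      simpa [ho', if_pos hj] using (hs j hj).2
    · have : o' j = (M.lam_nonempty p (ι j)).choose := by
        simp [ho', if_neg hj, hp]
      rw [this]
      exact (M.lam_nonempty p (ι j)).choose_spec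
  refine ⟨o', ?_, fun j hj => by simp [ho', if_pos hj]⟩
  by_cases hall : ∀ k, ∃ p, trace M q ι k = some p
  · refine Or.inl ⟨fun j => (trace M q ι j).getD q, rfl, ?_⟩
    intro j
    obtain ⟨p1, e1⟩ := hall j
    obtain ⟨p2, e2⟩ := hall (j + 1)
    have e3 : M.delta p1 (ι j) = some p2 := by
      rw [trace, e1] at e2; simpa using e2
    simp only [e1, e2, Option.getD_some]
    exact ⟨e3, key j p1 e1⟩
  · push_neg at hall
    obtain ⟨k0, hk0⟩ := hall
    have hex : ∃ k, trace M q ι k = none := ⟨k0,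
      Option.eq_none_iff_forall_not_mem.mpr (fun p hp => hk0 p hp)⟩
    have hmn : trace M q ι (Nat.find hex) = none := Nat.find_spec hex
    have hmpos : Nat.find hex ≠ 0 := by
      intro h
      rw [h] at hmn
      simp [trace] at hmn
    obtain ⟨m', hm'⟩ := Nat.exists_eq_succ_of_ne_zero hmpos
    rw [hm'] at hmn
    have hsome : ∀ j ≤ m', ∃ p, trace M q ι j = some p := by
      intro j hj
      rcases Option.eq_none_or_eq_some (trace M q ι j) with hn | hs2
      · exact absurd hn (Nat.find_min hex (by rw [hm']; exact Nat.lt_succ_of_le hj))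
      · exact hs2
    refine Or.inr ⟨m', fun j => (trace M q ι j).getD q, rfl, ?_, ?_⟩
    · intro j hj
      obtain ⟨p1, e1⟩ := hsome j hj.le
      obtain ⟨p2, e2⟩ := hsome (j + 1) hj
      have e3 : M.delta p1 (ι j) = some p2 := by
        rw [trace, e1] at e2; simpa using e2
      simp only [e1, e2, Option.getD_some]
      exact ⟨e3, key j p1 e1⟩
    · obtain ⟨p, e⟩ := hsome m' le_rfl
      rw [trace, e] at hmn
      simp only [e, Option.getD_some]
      simpa using hmn

lemma main_lemma (M : IGMM I O Q) (r : Q → Q)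
    (hr : ∀ q : Q, IGMM.Specializes M (r q) M q) :
    ∀ n (q : Q) (ι : ℕ → I → Bool) (o : ℕ → O → Bool),
      (M.remap r).Sat ⟨r q, ⟨q, rfl⟩⟩ ι o → Pn M (r q) ι o n := by
  intro n
  induction n with
  | zero => intro q ι o _; exact Or.inl ⟨fun _ => r q, rfl, by omega⟩
  | succ n ih =>
      intro q ι o hsat
      rcases hδ : M.delta (r q) (ι 0) with _ | p1
      · exact Or.inr ⟨0, Nat.succ_pos n, fun _ => r q, rfl, by omega, hδ⟩
      · have hδ' : (M.remap r).delta ⟨r q, ⟨q, rfl⟩⟩ (ι 0) = some ⟨r p1, ⟨p1, rfl⟩⟩ := by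
          show (M.delta (r q) (ι 0)).map _ = _
          rw [hδ]; rfl
        obtain ⟨ho0, htail⟩ := sat_tail (M.remap r) _ _ ι o hsat hδ'
        have hpn : Pn M (r p1) (fun j => ι (j + 1)) (fun j => o (j + 1)) n :=
          ih p1 _ _ htail
        obtain ⟨o', hsat', hag⟩ := pn_extend M (r p1) _ _ n hpn
        have hsat'' : M.Sat p1 (fun j => ι (j + 1)) o' := hr p1 _ hsat'
        have hpn' : Pn M p1 (fun j => ι (j + 1)) (fun j => o (j + 1)) n :=
          pn_congr M p1 _ hag (sat_pn M p1 _ o' hsat'' n)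
        exact pn_cons M (r q) p1 ι o n hδ ho0 hpn'

end IGMMAux
end Aux

/-- Theorem 2: if `r : Q → Q` satisfies `r(q) ⊑ q` for every state,
then the remapped machine `M'` is a specialization of `M`. -/
theorem remap_specializes {I O Q : Type*} [Fintype I] [Fintype O] [Fintype Q]
    (M : IGMM I O Q) (r : Q → Q)
    (hr : ∀ q : Q, IGMM.Specializes M (r q) M q) :
    IGMM.Specializes (M.remap r) (M.remap r).init M M.init := by
  intro ι o ho
  exact hr M.init ι (IGMMAux.pn_sat M (r M.init) ι o
    (fun n => IGMMAux.main_lemma M r hr n M.init ι o ho))
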